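/- Let G be a (K_3, K_{1,3}+2P_1)-free graph and let x be a vertex of G. Suppose A and B are disjoint independent sets of vertices in V(G) \ N[x] such that some vertex x_1 ∈ N(x) is adjacent to every vertex of A and to no vertex of B, and suppose |A| ≥ 8 and |B| ≥ 8. Then every vertex of A is adjacent to every vertex of B, i.e., G[A ∪ B] is complete bipartite. -/

import Mathlib

/-- K_{1,3} + 2P₁: a claw (0 adjacent to 1, 2, 3) plus two isolated vertices. -/
def K13plus2P1 : SimpleGraph (Fin 6) :=
  SimpleGraph.fromRel (fun a b => (a.val, b.val) ∈ [(0,1),(0,2),(0,3)])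

instance : DecidableRel K13plus2P1.Adj := fun a b =>
  decidable_of_iff _ (SimpleGraph.fromRel_adj _ a b).symm

set_option maxHeartbeats 1600000 in
lemma mk_emb {V : Type*} (G : SimpleGraph V) (c l1 l2 l3 p1 p2 : V)
    (a1 : G.Adj c l1) (a2 : G.Adj c l2) (a3 : G.Adj c l3)
    (n1 : ¬G.Adj c p1) (n2 : ¬G.Adj c p2)
    (n3 : ¬G.Adj l1 l2) (n4 : ¬G.Adj l1 l3) (n5 : ¬G.Adj l2 l3)
    (n6 : ¬G.Adj l1 p1) (n7 : ¬G.Adj l1 p2)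
    (n8 : ¬G.Adj l2 p1) (n9 : ¬G.Adj l2 p2)
    (n10 : ¬G.Adj l3 p1) (n11 : ¬G.Adj l3 p2)
    (n12 : ¬G.Adj p1 p2)
    (e1 : c ≠ p1) (e2 : c ≠ p2)
    (e3 : l1 ≠ l2) (e4 : l1 ≠ l3) (e5 : l2 ≠ l3)
    (e6 : l1 ≠ p1) (e7 : l1 ≠ p2) (e8 : l2 ≠ p1) (e9 : l2 ≠ p2)
    (e10 : l3 ≠ p1) (e11 : l3 ≠ p2) (e12 : p1 ≠ p2) :
    Nonempty (K13plus2P1 ↪g G) := by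
  have a1' := a1.symm; have a2' := a2.symm; have a3' := a3.symm
  have n1' := fun h : G.Adj p1 c => n1 h.symm
  have n2' := fun h : G.Adj p2 c => n2 h.symm
  have n3' := fun h : G.Adj l2 l1 => n3 h.symm
  have n4' := fun h : G.Adj l3 l1 => n4 h.symm
  have n5' := fun h : G.Adj l3 l2 => n5 h.symm
  have n6' := fun h : G.Adj p1 l1 => n6 h.symm
  have n7' := fun h : G.Adj p2 l1 => n7 h.symm
  have n8' := fun h : G.Adj p1 l2 => n8 h.symm
  have n9' := fun h : G.Adj p2 l2 => n9 h.symm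
  have n10' := fun h : G.Adj p1 l3 => n10 h.symm
  have n11' := fun h : G.Adj p2 l3 => n11 h.symm
  have n12' := fun h : G.Adj p2 p1 => n12 h.symm
  have d1 : c ≠ l1 := a1.ne
  have d2 : c ≠ l2 := a2.ne
  have d3 : c ≠ l3 := a3.ne
  have d1' := d1.symm; have d2' := d2.symm; have d3' := d3.symm
  have e1' := e1.symm; have e2' := e2.symm; have e3' := e3.symm
  have e4' := e4.symm; have e5' := e5.symm; have e6' := e6.symm
  have e7' := e7.symm; have e8' := e8.symm; have e9' := e9.symm
  have e10' := e10.symm; have e11' := e11.symm; have e12' := e12.symm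
  have i0 : ¬G.Adj c c := G.irrefl
  have i1 : ¬G.Adj l1 l1 := G.irrefl
  have i2 : ¬G.Adj l2 l2 := G.irrefl
  have i3 : ¬G.Adj l3 l3 := G.irrefl
  have i4 : ¬G.Adj p1 p1 := G.irrefl
  have i5 : ¬G.Adj p2 p2 := G.irrefl
  let f : Fin 6 → V := ![c,l1,l2,l3,p1,p2]
  refine ⟨⟨⟨f, ?_⟩, ?_⟩⟩
  · intro i j h
    fin_cases i <;> fin_cases j <;>
      first
        | rfl
        | exact absurd h (by assumption)
  · intro i j
    fin_cases i <;> fin_cases j <;>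
      first
        | exact iff_of_true (by assumption) (by decide)
        | exact iff_of_false (by assumption) (by decide)

lemma three_distinct {α : Type*} {S : Set α} (h : 2 < S.encard) :
    ∃ a b c, a ∈ S ∧ b ∈ S ∧ c ∈ S ∧ a ≠ b ∧ a ≠ c ∧ b ≠ c := by
  have h0 : S.Nonempty := by
    rw [Set.nonempty_iff_ne_empty]; rintro rfl; simp at h
  obtain ⟨c, hc⟩ := h0
  have hsum := Set.encard_diff_add_encard_of_subset (Set.singleton_subset_iff.2 hc)
  rw [Set.encard_singleton] at hsum
  have h1 : 1 < (S \ {c}).encard := by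
    by_contra hle
    push_neg at hle
    have h2 : S.encard ≤ 1 + 1 := hsum ▸ add_le_add hle le_rfl
    norm_num at h2
    exact absurd h (not_lt.2 h2)
  obtain ⟨a, b, ha, hb, hab⟩ := Set.one_lt_encard_iff.1 h1
  exact ⟨a, b, c, ha.1, hb.1, hc, hab, ha.2, hb.2⟩

theorem statement_11 {V : Type*} (G : SimpleGraph V) (htri : G.CliqueFree 3)
    (hfree : IsEmpty (K13plus2P1 ↪g G)) (x x1 : V) (hx1 : G.Adj x x1)
    (A B : Set V)
    (hA : ∀ a ∈ A, a ≠ x ∧ ¬ G.Adj x a) (hB : ∀ b ∈ B, b ≠ x ∧ ¬ G.Adj x b)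
    (hdisj : Disjoint A B)
    (hAind : A.Pairwise (fun u v => ¬ G.Adj u v))
    (hBind : B.Pairwise (fun u v => ¬ G.Adj u v))
    (hx1A : ∀ a ∈ A, G.Adj x1 a) (hx1B : ∀ b ∈ B, ¬ G.Adj x1 b)
    (hAcard : 8 ≤ A.encard) (hBcard : 8 ≤ B.encard) :
    ∀ a ∈ A, ∀ b ∈ B, G.Adj a b := by
  intro a0 ha0 b0 hb0
  by_contra hab
  -- Step 1: a0 has at most 2 neighbours in B
  have keyA : (B ∩ {v | G.Adj a0 v}).encard ≤ 2 := by
    by_contra h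
    push_neg at h
    obtain ⟨b1, b2, b3, h1, h2, h3, h12, h13, h23⟩ := three_distinct h
    -- config: center a0, leaves b1 b2 b3, isolated x, b0
    have hb1B := h1.1; have hb2B := h2.1; have hb3B := h3.1
    have ha1 : G.Adj a0 b1 := h1.2
    have ha2 : G.Adj a0 b2 := h2.2
    have ha3 : G.Adj a0 b3 := h3.2
    have hne1 : b1 ≠ b0 := fun e => hab (e ▸ ha1)
    have hne2 : b2 ≠ b0 := fun e => hab (e ▸ ha2)
    have hne3 : b3 ≠ b0 := fun e => hab (e ▸ ha3)
    refine (mk_emb G a0 b1 b2 b3 x b0 ha1 ha2 ha3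
      (fun h => (hA a0 ha0).2 h.symm) hab
      (hBind hb1B hb2B h12) (hBind hb1B hb3B h13) (hBind hb2B hb3B h23)
      (fun h => (hB b1 hb1B).2 h.symm) (hBind hb1B hb0 hne1)
      (fun h => (hB b2 hb2B).2 h.symm) (hBind hb2B hb0 hne2)
      (fun h => (hB b3 hb3B).2 h.symm) (hBind hb3B hb0 hne3)
      (hB b0 hb0).2
      (hA a0 ha0).1 (hdisj.ne_of_mem ha0 hb0)
      h12 h13 h23
      (hB b1 hb1B).1 hne1 (hB b2 hb2B).1 hne2 (hB b3 hb3B).1 hne3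
      ((hB b0 hb0).1).symm).elim hfree.false
  -- Step 2: any b in B non-adjacent to some a' in A has at most 2 neighbours in A
  have keyB : ∀ b ∈ B, ∀ a' ∈ A, ¬G.Adj a' b → (A ∩ {v | G.Adj b v}).encard ≤ 2 := by
    intro b hb a' ha' hnadj
    by_contra h
    push_neg at h
    obtain ⟨c1, c2, c3, h1, h2, h3, h12, h13, h23⟩ := three_distinct h
    have hc1A := h1.1; have hc2A := h2.1; have hc3A := h3.1
    have hj1 : G.Adj b c1 := h1.2
    have hj2 : G.Adj b c2 := h2.2
    have hj3 : G.Adj b c3 := h3.2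
    have hnadj' : ¬G.Adj b a' := fun h => hnadj h.symm
    have hne1 : c1 ≠ a' := fun e => hnadj' (e ▸ hj1)
    have hne2 : c2 ≠ a' := fun e => hnadj' (e ▸ hj2)
    have hne3 : c3 ≠ a' := fun e => hnadj' (e ▸ hj3)
    refine (mk_emb G b c1 c2 c3 x a' hj1 hj2 hj3
      (fun h => (hB b hb).2 h.symm) hnadj'
      (hAind hc1A hc2A h12) (hAind hc1A hc3A h13) (hAind hc2A hc3A h23)
      (fun h => (hA c1 hc1A).2 h.symm) (hAind hc1A ha' hne1)
      (fun h => (hA c2 hc2A).2 h.symm) (hAind hc2A ha' hne2)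
      (fun h => (hA c3 hc3A).2 h.symm) (hAind hc3A ha' hne3)
      (hA a' ha').2
      (hB b hb).1 ((hdisj.ne_of_mem ha' hb)).symm
      h12 h13 h23
      (hA c1 hc1A).1 hne1 (hA c2 hc2A).1 hne2 (hA c3 hc3A).1 hne3
      ((hA a' ha').1).symm).elim hfree.false
  -- Step 3: pick two non-neighbours b1, b2 of a0 in B
  have hBnn : 1 < (B \ {v | G.Adj a0 v}).encard := by
    by_contra hle
    push_neg at hle
    have hsum := Set.encard_diff_add_encard_inter B {v | G.Adj a0 v}
    have : B.encard ≤ 1 + 2 := hsum ▸ add_le_add hle keyA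
    norm_num at this
    have : (8 : ℕ∞) ≤ 3 := hBcard.trans this
    norm_num at this
  obtain ⟨b1, b2, hb1, hb2, hb12⟩ := Set.one_lt_encard_iff.1 hBnn
  have hb1B := hb1.1; have hb2B := hb2.1
  have hna1 : ¬G.Adj a0 b1 := hb1.2
  have hna2 : ¬G.Adj a0 b2 := hb2.2
  -- both b1 b2 have ≤ 2 neighbours in A
  have k1 := keyB b1 hb1B a0 ha0 hna1
  have k2 := keyB b2 hb2B a0 ha0 hna2
  -- pick two common non-neighbours a1, a2 in A
  have hAnn : 1 < (A \ ({v | G.Adj b1 v} ∪ {v | G.Adj b2 v})).encard := by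
    by_contra hle
    push_neg at hle
    have hsub : A ⊆ (A \ ({v | G.Adj b1 v} ∪ {v | G.Adj b2 v})) ∪
        ((A ∩ {v | G.Adj b1 v}) ∪ (A ∩ {v | G.Adj b2 v})) := by
      intro v hv
      by_cases h1 : G.Adj b1 v
      · exact Or.inr (Or.inl ⟨hv, h1⟩)
      by_cases h2 : G.Adj b2 v
      · exact Or.inr (Or.inr ⟨hv, h2⟩)
      · exact Or.inl ⟨hv, fun h => h.elim h1 h2⟩
    have hle2 : A.encard ≤ 1 + (2 + 2) := by
      refine (Set.encard_le_encard hsub).trans ?_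
      refine (Set.encard_union_le _ _).trans ?_
      exact add_le_add hle ((Set.encard_union_le _ _).trans (add_le_add k1 k2))
    norm_num at hle2
    have : (8 : ℕ∞) ≤ 5 := hAcard.trans hle2
    norm_num at this
  obtain ⟨a1, a2, ha1, ha2, ha12⟩ := Set.one_lt_encard_iff.1 hAnn
  have ha1A := ha1.1; have ha2A := ha2.1
  have hn11 : ¬G.Adj b1 a1 := fun h => ha1.2 (Or.inl h)
  have hn21 : ¬G.Adj b2 a1 := fun h => ha1.2 (Or.inr h)
  have hn12 : ¬G.Adj b1 a2 := fun h => ha2.2 (Or.inl h)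
  have hn22 : ¬G.Adj b2 a2 := fun h => ha2.2 (Or.inr h)
  -- config: center x1, leaves x a1 a2, isolated b1 b2
  have hx1b1 : x1 ≠ b1 := fun e => (hB b1 hb1B).2 (e ▸ hx1)
  have hx1b2 : x1 ≠ b2 := fun e => (hB b2 hb2B).2 (e ▸ hx1)
  refine (mk_emb G x1 x a1 a2 b1 b2 hx1.symm (hx1A a1 ha1A) (hx1A a2 ha2A)
    (hx1B b1 hb1B) (hx1B b2 hb2B)
    (fun h => (hA a1 ha1A).2 h) (fun h => (hA a2 ha2A).2 h)
    (hAind ha1A ha2A ha12)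
    (hB b1 hb1B).2 (hB b2 hb2B).2
    (fun h => hn11 h.symm) (fun h => hn21 h.symm)
    (fun h => hn12 h.symm) (fun h => hn22 h.symm)
    (hBind hb1B hb2B hb12)
    hx1b1 hx1b2
    ((hA a1 ha1A).1).symm ((hA a2 ha2A).1).symm ha12
    ((hB b1 hb1B).1).symm ((hB b2 hb2B).1).symm
    (hdisj.ne_of_mem ha1A hb1B) (hdisj.ne_of_mem ha1A hb2B)
    (hdisj.ne_of_mem ha2A hb1B) (hdisj.ne_of_mem ha2A hb2B)
    hb12).elim hfree.false
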